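/- Let e > 1 be an odd integer and let X be a nonempty β-set of rank n such that the set X' = {x ∈ X : x + e ∉ X} has exactly e elements. Let Y be the set of even elements of X', Z the set of odd elements of X', and m = | |Z| − |Y| |; for x ∈ X write λ(x) = x − #{x' ∈ X : x' < x}. Then m ≤ e, and: (i) if there exists a non-negative integer g ∉ X with g < max X and (max X) − g ≥ e + 1, then n ≥ e + 1 and n − λ(x) ≥ e for every x ∈ X with x ≠ max X; (ii) if max X = 2e − 1, then Σ_{x ∈ X, x even} λ(x) ≥ m − 2 whenever |Y| > |Z|, and Σ_{x ∈ X, x odd} λ(x) ≥ m − 2 whenever |Z| > |Y|. -/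

import Mathlib

open Finset


/-- The rank of a β-set `S` of size `s`: `(Σ_{x∈S} x) − s(s−1)/2`. -/
def brank (S : Finset ℕ) : ℕ := (∑ x ∈ S, x) - S.card * (S.card - 1) / 2

/-- Let `e > 1` be odd and `S` a nonempty β-set of rank `n` such that
`X' = {x ∈ S : x + e ∉ S}` has exactly `e` elements. Let `Y` and `Z` be the even and odd
elements of `X'` and `m = ||Z| − |Y||`; write `λ(x) = x − #{x' ∈ S : x' < x}`. Then
`m ≤ e`, and:
(i) if there is a non-negative integer `g ∉ S` with `g < max S` and `max S − g ≥ e + 1`,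
then `n ≥ e + 1` and `n − λ(x) ≥ e` for every `x ∈ S` with `x ≠ max S`;
(ii) if `max S = 2e − 1`, then `Σ_{x ∈ S even} λ(x) ≥ m − 2` whenever `|Y| > |Z|`, and
`Σ_{x ∈ S odd} λ(x) ≥ m − 2` whenever `|Z| > |Y|`. -/


lemma two_mul_sum_filter_lt (S : Finset ℕ) :
    2 * ∑ x ∈ S, (S.filter (· < x)).card = S.card * (S.card - 1) := by
  induction S using Finset.strongInduction with
  | _ S ih =>
    rcases S.eq_empty_or_nonempty with rfl | hS
    · simp
    · have hM : S.max' hS ∈ S := S.max'_mem hS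
      set M := S.max' hS with hMdef
      have hfM : S.filter (· < M) = S.erase M := by
        ext x
        simp only [mem_filter, mem_erase]
        constructor
        · rintro ⟨hx, hlt⟩; exact ⟨Nat.ne_of_lt hlt, hx⟩
        · rintro ⟨hne, hx⟩
          exact ⟨hx, lt_of_le_of_ne (S.le_max' x hx) hne⟩
      have key : ∀ x ∈ S.erase M, S.filter (· < x) = (S.erase M).filter (· < x) := by
        intro x hx
        rw [Finset.filter_erase, Finset.erase_eq_of_notMem]
        simp only [mem_filter, not_and, not_lt]
        intro _
        exact S.le_max' x (Finset.mem_of_mem_erase hx)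
      have hsum : ∑ x ∈ S, (S.filter (· < x)).card
          = (S.erase M).card + ∑ x ∈ S.erase M, ((S.erase M).filter (· < x)).card := by
        rw [← Finset.sum_erase_add S _ hM, hfM, add_comm]
        congr 1
        exact Finset.sum_congr rfl fun x hx => by rw [key x hx]
      have hih := ih (S.erase M) (Finset.erase_ssubset hM)
      have hcard : S.card = (S.erase M).card + 1 := by
        rw [Finset.card_erase_of_mem hM]
        have := Finset.card_pos.mpr hS
        omega
      rw [hsum, hcard]
      set b := (S.erase M).card with hb
      clear_value b
      cases b with
      | zero => omega
      | succ c =>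
        have h1 : 2 * (c + 1 + ∑ x ∈ S.erase M, ((S.erase M).filter (· < x)).card)
            = 2 * (c + 1) + 2 * ∑ x ∈ S.erase M, ((S.erase M).filter (· < x)).card := by ring
        rw [h1, hih]
        simp only [Nat.add_sub_cancel]
        ring

lemma card_mul_le_two_sum (W : Finset ℕ) :
    W.card * (W.card - 1) ≤ 2 * ∑ w ∈ W, w := by
  rw [← two_mul_sum_filter_lt W]
  have : ∀ w ∈ W, (W.filter (· < w)).card ≤ w := fun w _ => by
    calc (W.filter (· < w)).card ≤ (Finset.range w).card :=
      Finset.card_le_card (fun x hx => by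
        simp only [mem_filter] at hx; exact Finset.mem_range.mpr hx.2)
    _ = w := Finset.card_range w
  exact Nat.mul_le_mul_left 2 (Finset.sum_le_sum this)

lemma card_range_even (n : ℕ) : ((Finset.range n).filter (fun j => j % 2 = 0)).card = (n+1)/2 := by
  induction n with
  | zero => simp
  | succ k ih =>
    rw [Finset.range_add_one, Finset.filter_insert]
    split_ifs with h
    · rw [Finset.card_insert_of_notMem (by simp), ih]; omega
    · rw [ih]; omega

lemma card_range_odd (n : ℕ) : ((Finset.range n).filter (fun j => j % 2 = 1)).card = n/2 := by
  induction n with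
  | zero => simp
  | succ k ih =>
    rw [Finset.range_add_one, Finset.filter_insert]
    split_ifs with h
    · rw [Finset.card_insert_of_notMem (by simp), ih]; omega
    · rw [ih]; omega

lemma lam_eq_gap (S : Finset ℕ) (x : ℕ) :
    (x:ℤ) - ((S.filter (· < x)).card : ℤ)
      = (((Finset.range x).filter (fun y => y ∉ S)).card : ℤ) := by
  have h1 : S.filter (· < x) = (Finset.range x).filter (fun y => y ∈ S) := by
    ext y
    simp only [mem_filter, Finset.mem_range]
    exact ⟨fun ⟨a,b⟩ => ⟨b,a⟩, fun ⟨a,b⟩ => ⟨b,a⟩⟩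
  have h2 : ((Finset.range x).filter (fun y => y ∈ S)).card
      + ((Finset.range x).filter (fun y => y ∉ S)).card = x := by
    have := Finset.card_filter_add_card_filter_not
      (s := Finset.range x) (p := fun y => y ∈ S)
    simpa using this
  rw [h1]
  omega

lemma brank_cast' (S : Finset ℕ) :
    (brank S : ℤ) = ∑ x ∈ S, (((Finset.range x).filter (fun y => y ∉ S)).card : ℤ) := by
  have h := two_mul_sum_filter_lt S
  have hle : ∑ x ∈ S, (S.filter (· < x)).card ≤ ∑ x ∈ S, x := by
    apply Finset.sum_le_sum
    intro w _
    calc (S.filter (· < w)).card ≤ (Finset.range w).card :=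
      Finset.card_le_card (fun x hx => by
        simp only [mem_filter] at hx; exact Finset.mem_range.mpr hx.2)
    _ = w := Finset.card_range w
  have hdiv : S.card * (S.card - 1) / 2 = ∑ x ∈ S, (S.filter (· < x)).card := by omega
  unfold brank
  rw [hdiv, Nat.cast_sub hle, Nat.cast_sum, Nat.cast_sum, ← Finset.sum_sub_distrib]
  exact Finset.sum_congr rfl fun x _ => lam_eq_gap S x



lemma key_sum (K : Finset ℕ) (f v : ℕ → ℕ) (c lo : ℕ) (hclo : lo ≤ c + 1)
    (hinj : Set.InjOn v K) (hlo : ∀ k ∈ K, lo ≤ v k)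
    (hf : ∀ k ∈ K, (v k : ℤ) ≤ (c : ℤ) + (f k : ℤ)) :
    2 * (K.card : ℤ) - 2 * (c : ℤ) - 3 ≤ ∑ k ∈ K, (f k : ℤ) := by
  classical
  set K₁ := K.filter (fun k => c < v k) with hK₁
  set K₀ := K.filter (fun k => ¬ c < v k) with hK₀
  have hpart : K₁.card + K₀.card = K.card :=
    Finset.card_filter_add_card_filter_not (p := fun k => c < v k)
  have hinj₁ : Set.InjOn v K₁ := hinj.mono (by
    intro x hx; exact Finset.mem_of_mem_filter x hx)
  have hK0card : (K₀.card : ℤ) ≤ (c : ℤ) + 1 - lo := by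
    have himg : K₀.image v ⊆ Finset.Icc lo c := by
      intro w hw
      obtain ⟨k, hk, rfl⟩ := Finset.mem_image.mp hw
      have hk' := Finset.mem_filter.mp hk
      exact Finset.mem_Icc.mpr ⟨hlo k hk'.1, by omega⟩
    have hcardimg : (K₀.image v).card = K₀.card :=
      Finset.card_image_of_injOn (hinj.mono (by
        intro x hx; exact Finset.mem_of_mem_filter x hx))
    have := Finset.card_le_card himg
    rw [hcardimg, Nat.card_Icc] at this
    omega
  set V := K₁.image v with hV
  have hqV : V.card = K₁.card := Finset.card_image_of_injOn hinj₁
  have hVge : ∀ w ∈ V, c + 1 ≤ w := by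
    intro w hw
    obtain ⟨k, hk, rfl⟩ := Finset.mem_image.mp hw
    have := (Finset.mem_filter.mp hk).2
    omega
  set V' := V.image (fun w => w - (c+1)) with hV'
  have hinjV : Set.InjOn (fun w => w - (c+1)) V := by
    intro x hx y hy hxy
    have hx' := hVge x hx
    have hy' := hVge y hy
    simp only at hxy
    omega
  have hqV' : V'.card = V.card := Finset.card_image_of_injOn hinjV
  have hs1 : ∑ k ∈ K₁, (f k : ℤ) ≤ ∑ k ∈ K, (f k : ℤ) := by
    apply Finset.sum_le_sum_of_subset_of_nonneg (Finset.filter_subset _ _)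
    intro i _ _
    positivity
  have hs2 : ∑ k ∈ K₁, ((v k : ℤ) - c) ≤ ∑ k ∈ K₁, (f k : ℤ) := by
    apply Finset.sum_le_sum
    intro k hk
    have := hf k (Finset.mem_of_mem_filter k hk)
    omega
  have hs3 : ∑ w ∈ V, ((w : ℤ) - c) = ∑ k ∈ K₁, ((v k : ℤ) - c) :=
    Finset.sum_image (fun x hx y hy h => hinj₁ hx hy h)
  have hs4 : ∑ w ∈ V, ((w : ℤ) - c) = (∑ w ∈ V, (((w - (c+1) : ℕ) : ℤ))) + V.card := by
    calc ∑ w ∈ V, ((w : ℤ) - c) = ∑ w ∈ V, ((((w - (c+1) : ℕ) : ℤ)) + 1) := by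
          apply Finset.sum_congr rfl
          intro w hw
          have := hVge w hw
          rw [Nat.cast_sub (by omega : c + 1 ≤ w)]
          push_cast
          ring
      _ = (∑ w ∈ V, (((w - (c+1) : ℕ) : ℤ))) + ∑ w ∈ V, (1:ℤ) := Finset.sum_add_distrib
      _ = (∑ w ∈ V, (((w - (c+1) : ℕ) : ℤ))) + V.card := by
          rw [Finset.sum_const, nsmul_eq_mul, mul_one]
  have hs5 : ∑ u ∈ V', (u : ℤ) = ∑ w ∈ V, (((w - (c+1) : ℕ) : ℤ)) :=
    Finset.sum_image (fun x hx y hy h => hinjV hx hy h)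
  have hVsum := card_mul_le_two_sum V'
  set q : ℕ := K₁.card with hq
  have h1 : V'.card = q := by rw [hqV', hqV]
  have hcastS : (∑ u ∈ V', (u:ℤ)) = ((∑ u ∈ V', u : ℕ) : ℤ) := by push_cast; rfl
  have hSV : (q : ℤ) * ((q : ℤ) - 1) ≤ 2 * ∑ u ∈ V', (u : ℤ) := by
    rw [hcastS]
    rw [h1] at hVsum
    rcases Nat.eq_zero_or_pos q with h0 | hpos
    · have hnn : (0:ℤ) ≤ ((∑ u ∈ V', u : ℕ) : ℤ) := by positivity
      rw [h0]
      push_cast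
      nlinarith
    · have e1 : (q:ℤ)*((q:ℤ)-1) = ((q*(q-1):ℕ):ℤ) := by
        push_cast [Nat.cast_sub hpos]
        ring
      rw [e1]
      calc ((q*(q-1):ℕ):ℤ) ≤ ((2 * ∑ u ∈ V', u : ℕ) : ℤ) := Nat.cast_le.mpr hVsum
        _ = 2 * ((∑ u ∈ V', u : ℕ) : ℤ) := by push_cast; ring
  have hSVnn : (0:ℤ) ≤ ∑ u ∈ V', (u : ℤ) := Finset.sum_nonneg fun i _ => by positivity
  have hchain : (∑ u ∈ V', (u : ℤ)) + q ≤ ∑ k ∈ K, (f k : ℤ) := by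
    have e2 : ∑ w ∈ V, ((w:ℤ) - c) = (∑ u ∈ V', (u:ℤ)) + q := by
      rw [hs4, ← hs5, hqV]
    linarith [hs1, hs2, hs3, e2]
  have hKcard : (K.card : ℤ) ≤ (q : ℤ) + (c : ℤ) + 1 - lo := by
    have : (K.card : ℤ) = (q : ℤ) + (K₀.card : ℤ) := by exact_mod_cast hpart.symm
    omega
  have hfin : (q : ℤ) - 1 ≤ ∑ u ∈ V', (u : ℤ) := by
    rcases le_or_gt (q : ℤ) 1 with h | h
    · linarith
    · nlinarith
  have hlo' : (0:ℤ) ≤ (lo : ℤ) := by positivity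
  linarith



lemma part_i (e : ℕ) (S : Finset ℕ) (hS : S.Nonempty) (g : ℕ) (hg : g ∉ S)
    (hgM : g + (e + 1) ≤ S.max' hS) :
    (e : ℤ) + 1 ≤ (brank S : ℤ) ∧
      ∀ x ∈ S, x ≠ S.max' hS →
        (e : ℤ) ≤ (brank S : ℤ) - ((x : ℤ) - ((S.filter (· < x)).card : ℤ)) := by
  classical
  set gc : ℕ → ℕ := fun x => ((Finset.range x).filter (fun y => y ∉ S)).card with hgc_def
  have hbr : (brank S : ℤ) = ∑ x ∈ S, (gc x : ℤ) := brank_cast' S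
  set M := S.max' hS with hMdef
  have hM : M ∈ S := S.max'_mem hS
  set F := S.filter (fun x => g < x ∧ x < M) with hF
  set c := F.card with hc
  -- key count near M
  have hIco : (Finset.Ico g M).filter (fun y => y ∉ S) ⊆ (Finset.range M).filter (fun y => y ∉ S) := by
    apply Finset.filter_subset_filter
    intro x hx
    rw [Finset.mem_Ico] at hx
    exact Finset.mem_range.mpr hx.2
  have hA : ((Finset.Ico g M).filter (fun y => y ∉ S)).card ≤ gc M := Finset.card_le_card hIco
  have hAB : ((Finset.Ico g M).filter (fun y => y ∈ S)).card
      + ((Finset.Ico g M).filter (fun y => y ∉ S)).card = M - g := by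
    have := Finset.card_filter_add_card_filter_not
      (s := Finset.Ico g M) (p := fun y => y ∈ S)
    simpa [Nat.card_Ico] using this
  have hBF : (Finset.Ico g M).filter (fun y => y ∈ S) = F := by
    ext x
    simp only [mem_filter, Finset.mem_Ico, hF]
    constructor
    · rintro ⟨⟨h1, h2⟩, h3⟩
      refine ⟨h3, ?_, h2⟩
      rcases Nat.eq_or_lt_of_le h1 with rfl | h
      · exact absurd h3 hg
      · exact h
    · rintro ⟨h1, h2, h3⟩
      exact ⟨⟨by omega, h3⟩, h1⟩
  have hgcM : M - g ≤ gc M + c := by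
    rw [hBF] at hAB
    omega
  have h_one : ∀ x ∈ F, 1 ≤ gc x := by
    intro x hx
    rw [hF, Finset.mem_filter] at hx
    have : g ∈ (Finset.range x).filter (fun y => y ∉ S) := by
      rw [Finset.mem_filter, Finset.mem_range]
      exact ⟨hx.2.1, hg⟩
    exact Finset.card_pos.mpr ⟨g, this⟩
  have hMF : M ∉ F := by
    rw [hF, Finset.mem_filter]
    rintro ⟨-, -, h⟩
    omega
  have hMg : e + 1 ≤ M - g := by omega
  constructor
  · -- first goal
    have hsub1 : insert M F ⊆ S := by
      rw [Finset.insert_subset_iff]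
      exact ⟨hM, Finset.filter_subset _ _⟩
    have h1 : ∑ x ∈ insert M F, gc x ≤ ∑ x ∈ S, gc x :=
      Finset.sum_le_sum_of_subset hsub1
    have h2 : ∑ x ∈ insert M F, gc x = gc M + ∑ x ∈ F, gc x := Finset.sum_insert hMF
    have h3 : c ≤ ∑ x ∈ F, gc x := by
      calc c = ∑ _x ∈ F, 1 := by rw [Finset.sum_const, smul_eq_mul, mul_one]
        _ ≤ ∑ x ∈ F, gc x := Finset.sum_le_sum h_one
    have hN : e + 1 ≤ ∑ x ∈ S, gc x := by omega
    rw [hbr]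
    calc (e:ℤ) + 1 = ((e + 1 : ℕ) : ℤ) := by push_cast; ring
      _ ≤ ((∑ x ∈ S, gc x : ℕ) : ℤ) := Nat.cast_le.mpr hN
      _ = ∑ x ∈ S, (gc x : ℤ) := by push_cast; rfl
  · intro x hx hxne
    rw [hbr, lam_eq_gap S x]
    have herase : ∑ y ∈ S.erase x, (gc y : ℤ) + (gc x : ℤ) = ∑ y ∈ S, (gc y : ℤ) :=
      Finset.sum_erase_add S _ hx
    have hgoal : e ≤ ∑ y ∈ S.erase x, gc y := by
      have hsub2 : insert M (F.erase x) ⊆ S.erase x := by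
        rw [Finset.insert_subset_iff]
        constructor
        · exact Finset.mem_erase.mpr ⟨fun h => hxne h.symm, hM⟩
        · exact Finset.erase_subset_erase x (Finset.filter_subset _ _)
      have hMF' : M ∉ F.erase x := fun h => hMF (Finset.mem_of_mem_erase h)
      have h1 : ∑ y ∈ insert M (F.erase x), gc y ≤ ∑ y ∈ S.erase x, gc y :=
        Finset.sum_le_sum_of_subset hsub2
      have h2 : ∑ y ∈ insert M (F.erase x), gc y = gc M + ∑ y ∈ F.erase x, gc y :=
        Finset.sum_insert hMF'
      have h3 : (F.erase x).card ≤ ∑ y ∈ F.erase x, gc y := by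
        calc (F.erase x).card = ∑ _y ∈ F.erase x, 1 := by
              rw [Finset.sum_const, smul_eq_mul, mul_one]
          _ ≤ ∑ y ∈ F.erase x, gc y :=
              Finset.sum_le_sum fun y hy => h_one y (Finset.mem_of_mem_erase hy)
      have h4 : c ≤ (F.erase x).card + 1 := by
        by_cases hxF : x ∈ F
        · rw [Finset.card_erase_of_mem hxF]
          have : 1 ≤ c := Finset.card_pos.mpr ⟨x, hxF⟩
          omega
        · rw [Finset.erase_eq_of_notMem hxF]; omega
      omega
    have : ((e : ℕ) : ℤ) ≤ ((∑ y ∈ S.erase x, gc y : ℕ) : ℤ) := Nat.cast_le.mpr hgoal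
    have hcast : ((∑ y ∈ S.erase x, gc y : ℕ) : ℤ) = ∑ y ∈ S.erase x, (gc y : ℤ) := by
      push_cast; rfl
    have hgoal2 : (e:ℤ) ≤ ∑ y ∈ S, (gc y : ℤ) - (gc x : ℤ) := by omega
    exact hgoal2


lemma gap_ge (S : Finset ℕ) (e k : ℕ) (hk : k ≤ e) :
    ((Finset.range k).filter (fun j => j ∉ S ∨ j + e ∉ S)).card
      ≤ ((Finset.range (k+e)).filter (fun y => y ∉ S)).card := by
  classical
  apply Finset.card_le_card_of_injOn (fun j => if j ∈ S then j + e else j)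
  · intro j hj
    rw [Finset.mem_coe, Finset.mem_filter, Finset.mem_range] at hj
    obtain ⟨hjk, hdisj⟩ := hj
    by_cases hjS : j ∈ S
    · simp only [hjS, if_true]
      rw [Finset.mem_coe, Finset.mem_filter, Finset.mem_range]
      exact ⟨by omega, hdisj.resolve_left (by simp [hjS])⟩
    · simp only [hjS, if_false]
      rw [Finset.mem_coe, Finset.mem_filter, Finset.mem_range]
      exact ⟨by omega, hjS⟩
  · intro a ha b hb hab
    rw [Finset.coe_filter] at ha hb
    simp only [Set.mem_setOf_eq, Finset.mem_range] at ha hb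
    by_cases haS : a ∈ S <;> by_cases hbS : b ∈ S <;>
      simp only [haS, hbS, if_true, if_false] at hab <;> omega

lemma part_ii_main (e t : ℕ) (he : 1 < e) (ht : e = 2*t+1) (S : Finset ℕ) (hS : S.Nonempty)
    (hX' : (S.filter fun x => x + e ∉ S).card = e) (hmax : S.max' hS = 2*e - 1) :
    ∃ N E : ℕ, 1 ≤ E ∧
      ((S.filter fun x => x + e ∉ S).filter fun x => x % 2 = 1).card + N = t + E ∧
      ((S.filter fun x => x + e ∉ S).filter fun x => x % 2 = 0).card + E = t + 1 + N ∧
      2*(N:ℤ) - 2*(E:ℤ) - 1 ≤ ∑ x ∈ S.filter (fun x => x % 2 = 0),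
          ((x : ℤ) - ((S.filter (· < x)).card : ℤ)) ∧
      2*(E:ℤ) - 2*(N:ℤ) - 3 ≤ ∑ x ∈ S.filter (fun x => x % 2 = 1),
          ((x : ℤ) - ((S.filter (· < x)).card : ℤ)) := by
  classical
  have h2e1 : 2*e - 1 ∈ S := hmax ▸ S.max'_mem hS
  have hsub : ∀ x ∈ S, x < 2*e := by
    intro x hx
    have := S.le_max' x hx
    omega
  set X' := S.filter (fun x => x + e ∉ S) with hX'def
  -- all columns nonempty
  have hmodlt : ∀ z, z < 2*e → z % e = z ∨ z % e + e = z := by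
    intro z hz
    rcases lt_or_ge z e with h | h
    · exact Or.inl (Nat.mod_eq_of_lt h)
    · right
      have h1 : z % e = (z - e) % e := by
        conv_lhs => rw [Nat.mod_eq_sub_mod h]
      have h2 : (z - e) % e = z - e := Nat.mod_eq_of_lt (by omega)
      omega
  have hinjX : Set.InjOn (· % e) X' := by
    intro x hx y hy hxy
    rw [Finset.mem_coe, hX'def, Finset.mem_filter] at hx hy
    simp only at hxy
    have hx2 := hsub x hx.1
    have hy2 := hsub y hy.1
    rcases hmodlt x hx2 with h1 | h1 <;> rcases hmodlt y hy2 with h2 | h2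
    · omega
    · -- y = x + e
      exfalso
      have : y = x + e := by omega
      exact hx.2 (this ▸ hy.1)
    · exfalso
      have : x = y + e := by omega
      exact hy.2 (this ▸ hx.1)
    · omega
  have himg : X'.image (· % e) = Finset.range e := by
    apply Finset.eq_of_subset_of_card_le
    · intro x hx
      obtain ⟨y, _, rfl⟩ := Finset.mem_image.mp hx
      exact Finset.mem_range.mpr (Nat.mod_lt y (by omega))
    · rw [Finset.card_range, Finset.card_image_of_injOn hinjX, hX']
  have hcols : ∀ k, k < e → (k ∈ S ∨ k + e ∈ S) := by
    intro k hk
    have hk' : k ∈ X'.image (· % e) := himg ▸ Finset.mem_range.mpr hk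
    obtain ⟨x, hx, hxk⟩ := Finset.mem_image.mp hk'
    rw [hX'def, Finset.mem_filter] at hx
    have hx2 := hsub x hx.1
    rcases hmodlt x hx2 with h1 | h1
    · left; rw [← hxk, h1]; exact hx.1
    · right
      have : k + e = x := by omega
      rw [this]; exact hx.1
  -- columns
  set Ke := (Finset.range e).filter (fun k => k % 2 = 0 ∧ k + e ∈ S) with hKe
  set Ko := (Finset.range e).filter (fun k => k % 2 = 1 ∧ k + e ∈ S) with hKo
  set E := Ke.card with hE
  set N := Ko.card with hN
  have he1Ke : e - 1 ∈ Ke := by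
    rw [hKe, Finset.mem_filter, Finset.mem_range]
    refine ⟨by omega, by omega, ?_⟩
    have h : e - 1 + e = 2*e - 1 := by omega
    rw [h]; exact h2e1
  have hE1 : 1 ≤ E := Finset.card_pos.mpr ⟨e - 1, he1Ke⟩
  -- X' decomposition
  have hXsplit : X' = (S.filter (fun x => x < e ∧ x + e ∉ S)) ∪ (S.filter (fun x => e ≤ x)) := by
    ext x
    rw [hX'def]
    simp only [Finset.mem_filter, Finset.mem_union]
    constructor
    · rintro ⟨hxS, hxe⟩
      rcases lt_or_ge x e with h | h
      · exact Or.inl ⟨hxS, h, hxe⟩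
      · exact Or.inr ⟨hxS, h⟩
    · rintro (⟨hxS, _, hxe⟩ | ⟨hxS, h⟩)
      · exact ⟨hxS, hxe⟩
      · refine ⟨hxS, fun hc => ?_⟩
        have := hsub _ hc
        omega
  set Sl := S.filter (fun x => x < e ∧ x + e ∉ S) with hSl
  set Sh := S.filter (fun x => e ≤ x) with hSh
  have hdisjSS : Disjoint Sl Sh := by
    rw [Finset.disjoint_left]
    intro a ha hb
    rw [hSl, Finset.mem_filter] at ha
    rw [hSh, Finset.mem_filter] at hb
    omega
  have hcard1 : (X'.filter (fun x => x % 2 = 1)).card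
      = (Sl.filter (fun x => x % 2 = 1)).card + (Sh.filter (fun x => x % 2 = 1)).card := by
    rw [hXsplit, Finset.filter_union,
      Finset.card_union_of_disjoint (Finset.disjoint_filter_filter hdisjSS)]
  have hcard0 : (X'.filter (fun x => x % 2 = 0)).card
      = (Sl.filter (fun x => x % 2 = 0)).card + (Sh.filter (fun x => x % 2 = 0)).card := by
    rw [hXsplit, Finset.filter_union,
      Finset.card_union_of_disjoint (Finset.disjoint_filter_filter hdisjSS)]
  have hSh1 : Sh.filter (fun x => x % 2 = 1) = Ke.image (· + e) := by
    ext x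
    constructor
    · intro hx
      rw [Finset.mem_filter, hSh, Finset.mem_filter] at hx
      obtain ⟨⟨hxS, hex⟩, hodd⟩ := hx
      have hx2 := hsub x hxS
      refine Finset.mem_image.mpr ⟨x - e, ?_, Nat.sub_add_cancel (by omega : e ≤ x)⟩
      rw [hKe, Finset.mem_filter, Finset.mem_range]
      refine ⟨by omega, by omega, ?_⟩
      have hxe : x - e + e = x := by omega
      rw [hxe]; exact hxS
    · intro hx
      obtain ⟨k, hk, rfl⟩ := Finset.mem_image.mp hx
      rw [hKe, Finset.mem_filter, Finset.mem_range] at hk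
      rw [Finset.mem_filter, hSh, Finset.mem_filter]
      exact ⟨⟨hk.2.2, by omega⟩, by omega⟩
  have hSh0 : Sh.filter (fun x => x % 2 = 0) = Ko.image (· + e) := by
    ext x
    constructor
    · intro hx
      rw [Finset.mem_filter, hSh, Finset.mem_filter] at hx
      obtain ⟨⟨hxS, hex⟩, hodd⟩ := hx
      have hx2 := hsub x hxS
      refine Finset.mem_image.mpr ⟨x - e, ?_, Nat.sub_add_cancel (by omega : e ≤ x)⟩
      rw [hKo, Finset.mem_filter, Finset.mem_range]
      refine ⟨by omega, by omega, ?_⟩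
      have hxe : x - e + e = x := by omega
      rw [hxe]; exact hxS
    · intro hx
      obtain ⟨k, hk, rfl⟩ := Finset.mem_image.mp hx
      rw [hKo, Finset.mem_filter, Finset.mem_range] at hk
      rw [Finset.mem_filter, hSh, Finset.mem_filter]
      exact ⟨⟨hk.2.2, by omega⟩, by omega⟩
  have haddinj : ∀ T : Finset ℕ, (T.image (· + e)).card = T.card := by
    intro T
    exact Finset.card_image_of_injective T (add_left_injective e)
  -- low parts
  have hSl1 : Sl.filter (fun x => x % 2 = 1)
      = (Finset.range e).filter (fun k => k % 2 = 1 ∧ ¬ k + e ∈ S) := by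
    ext x
    rw [Finset.mem_filter, hSl, Finset.mem_filter, Finset.mem_filter, Finset.mem_range]
    constructor
    · rintro ⟨⟨hxS, hlt, hne⟩, hp⟩
      exact ⟨hlt, hp, hne⟩
    · rintro ⟨hlt, hp, hne⟩
      have := (hcols x hlt).resolve_right hne
      exact ⟨⟨this, hlt, hne⟩, hp⟩
  have hSl0 : Sl.filter (fun x => x % 2 = 0)
      = (Finset.range e).filter (fun k => k % 2 = 0 ∧ ¬ k + e ∈ S) := by
    ext x
    rw [Finset.mem_filter, hSl, Finset.mem_filter, Finset.mem_filter, Finset.mem_range]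
    constructor
    · rintro ⟨⟨hxS, hlt, hne⟩, hp⟩
      exact ⟨hlt, hp, hne⟩
    · rintro ⟨hlt, hp, hne⟩
      have := (hcols x hlt).resolve_right hne
      exact ⟨⟨this, hlt, hne⟩, hp⟩
  -- partitions of odd/even columns
  have hparto : N + ((Finset.range e).filter (fun k => k % 2 = 1 ∧ ¬ k + e ∈ S)).card = t := by
    have h1 := Finset.card_filter_add_card_filter_not
      (s := (Finset.range e).filter (fun k => k % 2 = 1)) (p := fun k => k + e ∈ S)
    rw [Finset.filter_filter, Finset.filter_filter, card_range_odd] at h1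
    rw [hN, hKo]
    omega
  have hparte : E + ((Finset.range e).filter (fun k => k % 2 = 0 ∧ ¬ k + e ∈ S)).card = t + 1 := by
    have h1 := Finset.card_filter_add_card_filter_not
      (s := (Finset.range e).filter (fun k => k % 2 = 0)) (p := fun k => k + e ∈ S)
    rw [Finset.filter_filter, Finset.filter_filter, card_range_even] at h1
    rw [hE, hKe]
    omega
  have hcardZ : (X'.filter (fun x => x % 2 = 1)).card + N = t + E := by
    rw [hcard1, hSh1, haddinj, hSl1]
    omega
  have hcardY : (X'.filter (fun x => x % 2 = 0)).card + E = t + 1 + N := by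
    rw [hcard0, hSh0, haddinj, hSl0]
    omega
  -- gap counting function
  set gc : ℕ → ℕ := fun x => ((Finset.range x).filter (fun y => y ∉ S)).card with hgc
  set f : ℕ → ℕ := fun k => ((Finset.range k).filter (fun j => j ∉ S ∨ j + e ∉ S)).card with hf
  have hsumlam : ∀ (p : ℕ), ∑ x ∈ S.filter (fun x => x % 2 = p),
      ((x : ℤ) - ((S.filter (· < x)).card : ℤ))
      = ((∑ x ∈ S.filter (fun x => x % 2 = p), gc x : ℕ) : ℤ) := by
    intro p
    rw [Finset.sum_congr rfl (fun x _ => lam_eq_gap S x)]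
    push_cast
    rfl
  have hchain : ∀ (K : Finset ℕ) (p : ℕ), (∀ k ∈ K, k < e ∧ (k + e) % 2 = p ∧ k + e ∈ S) →
      ∑ k ∈ K, f k ≤ ∑ x ∈ S.filter (fun x => x % 2 = p), gc x := by
    intro K p hK
    have hs1 : ∑ k ∈ K, f k ≤ ∑ k ∈ K, gc (k + e) := by
      apply Finset.sum_le_sum
      intro k hk
      exact gap_ge S e k (le_of_lt (hK k hk).1)
    have hs2 : ∑ k ∈ K, gc (k + e) = ∑ x ∈ K.image (· + e), gc x := by
      rw [Finset.sum_image (fun a _ b _ h => by omega : ∀ a ∈ K, ∀ b ∈ K, a + e = b + e → a = b)]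
    have hs3 : K.image (· + e) ⊆ S.filter (fun x => x % 2 = p) := by
      intro x hx
      obtain ⟨k, hk, rfl⟩ := Finset.mem_image.mp hx
      obtain ⟨h1, h2, h3⟩ := hK k hk
      exact Finset.mem_filter.mpr ⟨h3, h2⟩
    have hs4 : ∑ x ∈ K.image (· + e), gc x ≤ ∑ x ∈ S.filter (fun x => x % 2 = p), gc x :=
      Finset.sum_le_sum_of_subset hs3
    omega
  refine ⟨N, E, hE1, hcardZ, hcardY, ?_, ?_⟩
  · -- branch 1 : even sum, K = Ko
    have hmemKo : ∀ k ∈ Ko, k < e ∧ k % 2 = 1 ∧ k + e ∈ S := by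
      intro k hk
      rw [hKo, Finset.mem_filter, Finset.mem_range] at hk
      exact ⟨hk.1, hk.2.1, hk.2.2⟩
    have hf1 : ∀ k ∈ Ko, (((k+1)/2 : ℕ) : ℤ) ≤ (((E - 1 : ℕ)) : ℤ) + (f k : ℤ) := by
      intro k hk
      obtain ⟨hke, hkodd, hkhi⟩ := hmemKo k hk
      have h1 := Finset.card_filter_add_card_filter_not
        (s := (Finset.range k).filter (fun j => j % 2 = 0)) (p := fun j => j + e ∈ S)
      rw [Finset.filter_filter, Finset.filter_filter, card_range_even] at h1
      have h2 : ((Finset.range k).filter (fun j => j % 2 = 0 ∧ j + e ∈ S)).card ≤ E - 1 := by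
        have hss : (Finset.range k).filter (fun j => j % 2 = 0 ∧ j + e ∈ S) ⊆ Ke.erase (e-1) := by
          intro j hj
          rw [Finset.mem_filter, Finset.mem_range] at hj
          rw [Finset.mem_erase, hKe, Finset.mem_filter, Finset.mem_range]
          exact ⟨by omega, by omega, hj.2.1, hj.2.2⟩
        have := Finset.card_le_card hss
        rw [Finset.card_erase_of_mem he1Ke] at this
        omega
      have h3 : ((Finset.range k).filter (fun j => j % 2 = 0 ∧ ¬ j + e ∈ S)).card ≤ f k := by
        apply Finset.card_le_card
        apply Finset.monotone_filter_right
        intro a _ ha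
        exact Or.inr ha.2
      have : (k+1)/2 ≤ (E - 1) + f k := by omega
      exact_mod_cast Nat.cast_le.mpr this
    have hinjv : Set.InjOn (fun k => (k+1)/2) Ko := by
      intro a ha b hb h
      have ha' := hmemKo a (Finset.mem_coe.mp ha)
      have hb' := hmemKo b (Finset.mem_coe.mp hb)
      simp only at h
      omega
    have hlo : ∀ k ∈ Ko, 1 ≤ (k+1)/2 := by
      intro k hk
      have := hmemKo k hk
      omega
    have hkey := key_sum Ko f (fun k => (k+1)/2) (E-1) 1 (by omega) hinjv hlo hf1
    have hch := hchain Ko 0 (fun k hk => by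
      obtain ⟨h1, h2, h3⟩ := hmemKo k hk
      exact ⟨h1, by omega, h3⟩)
    rw [hsumlam 0]
    have hcast1 : (∑ k ∈ Ko, (f k : ℤ)) = ((∑ k ∈ Ko, f k : ℕ) : ℤ) := by push_cast; rfl
    have hcast2 : ((E - 1 : ℕ) : ℤ) = (E : ℤ) - 1 := by omega
    have hcast3 : ((∑ k ∈ Ko, f k : ℕ) : ℤ) ≤ ((∑ x ∈ S.filter (fun x => x % 2 = 0), gc x : ℕ) : ℤ) :=
      Nat.cast_le.mpr hch
    rw [hcast1, hcast2] at hkey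
    rw [← hN] at hkey
    linarith
  · -- branch 2 : odd sum, K = Ke
    have hmemKe : ∀ k ∈ Ke, k < e ∧ k % 2 = 0 ∧ k + e ∈ S := by
      intro k hk
      rw [hKe, Finset.mem_filter, Finset.mem_range] at hk
      exact ⟨hk.1, hk.2.1, hk.2.2⟩
    have hf2 : ∀ k ∈ Ke, ((k/2 : ℕ) : ℤ) ≤ ((N : ℕ) : ℤ) + (f k : ℤ) := by
      intro k hk
      obtain ⟨hke, hkev, hkhi⟩ := hmemKe k hk
      have h1 := Finset.card_filter_add_card_filter_not
        (s := (Finset.range k).filter (fun j => j % 2 = 1)) (p := fun j => j + e ∈ S)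
      rw [Finset.filter_filter, Finset.filter_filter, card_range_odd] at h1
      have h2 : ((Finset.range k).filter (fun j => j % 2 = 1 ∧ j + e ∈ S)).card ≤ N := by
        have hss : (Finset.range k).filter (fun j => j % 2 = 1 ∧ j + e ∈ S) ⊆ Ko := by
          intro j hj
          rw [Finset.mem_filter, Finset.mem_range] at hj
          rw [hKo, Finset.mem_filter, Finset.mem_range]
          exact ⟨by omega, hj.2.1, hj.2.2⟩
        exact Finset.card_le_card hss
      have h3 : ((Finset.range k).filter (fun j => j % 2 = 1 ∧ ¬ j + e ∈ S)).card ≤ f k := by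
        apply Finset.card_le_card
        apply Finset.monotone_filter_right
        intro a _ ha
        exact Or.inr ha.2
      have : k/2 ≤ N + f k := by omega
      exact_mod_cast Nat.cast_le.mpr this
    have hinjv : Set.InjOn (fun k => k/2) Ke := by
      intro a ha b hb h
      have ha' := hmemKe a (Finset.mem_coe.mp ha)
      have hb' := hmemKe b (Finset.mem_coe.mp hb)
      simp only at h
      omega
    have hkey := key_sum Ke f (fun k => k/2) N 0 (by omega) hinjv (fun k _ => Nat.zero_le _) hf2
    have hch := hchain Ke 1 (fun k hk => by
      obtain ⟨h1, h2, h3⟩ := hmemKe k hk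
      exact ⟨h1, by omega, h3⟩)
    rw [hsumlam 1]
    have hcast1 : (∑ k ∈ Ke, (f k : ℤ)) = ((∑ k ∈ Ke, f k : ℕ) : ℤ) := by push_cast; rfl
    have hcast3 : ((∑ k ∈ Ke, f k : ℕ) : ℤ) ≤ ((∑ x ∈ S.filter (fun x => x % 2 = 1), gc x : ℕ) : ℤ) :=
      Nat.cast_le.mpr hch
    rw [hcast1] at hkey
    rw [← hE] at hkey
    linarith

theorem beta_set_helper_lemma (e : ℕ) (he : 1 < e) (hodd : Odd e)
    (S : Finset ℕ) (hS : S.Nonempty)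
    (hX' : (S.filter fun x => x + e ∉ S).card = e)
    (m : ℤ)
    (hm : m = |(((S.filter fun x => x + e ∉ S).filter fun x => x % 2 = 1).card : ℤ)
        - (((S.filter fun x => x + e ∉ S).filter fun x => x % 2 = 0).card : ℤ)|) :
    m ≤ (e : ℤ) ∧
    ((∃ g : ℕ, g ∉ S ∧ g + (e + 1) ≤ S.max' hS) →
      (e : ℤ) + 1 ≤ (brank S : ℤ) ∧
        ∀ x ∈ S, x ≠ S.max' hS →
          (e : ℤ) ≤ (brank S : ℤ) - ((x : ℤ) - ((S.filter (· < x)).card : ℤ))) ∧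
    (S.max' hS = 2 * e - 1 →
      ((((S.filter fun x => x + e ∉ S).filter fun x => x % 2 = 1).card
          < ((S.filter fun x => x + e ∉ S).filter fun x => x % 2 = 0).card →
        m - 2 ≤ ∑ x ∈ S.filter (fun x => x % 2 = 0),
          ((x : ℤ) - ((S.filter (· < x)).card : ℤ))) ∧
      (((S.filter fun x => x + e ∉ S).filter fun x => x % 2 = 0).card
          < ((S.filter fun x => x + e ∉ S).filter fun x => x % 2 = 1).card →
        m - 2 ≤ ∑ x ∈ S.filter (fun x => x % 2 = 1),
          ((x : ℤ) - ((S.filter (· < x)).card : ℤ))))) := by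
  classical
  obtain ⟨t, ht⟩ := hodd
  set cZ := ((S.filter fun x => x + e ∉ S).filter fun x => x % 2 = 1).card with hcZ
  set cY := ((S.filter fun x => x + e ∉ S).filter fun x => x % 2 = 0).card with hcY
  have hpartZY : cZ + cY = e := by
    have h1 := Finset.card_filter_add_card_filter_not
      (s := S.filter fun x => x + e ∉ S) (p := fun x => x % 2 = 1)
    have h2 : ((S.filter fun x => x + e ∉ S).filter fun x => ¬ x % 2 = 1)
        = ((S.filter fun x => x + e ∉ S).filter fun x => x % 2 = 0) := by
      apply Finset.filter_congr
      intro x _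
      show ¬ x % 2 = 1 ↔ x % 2 = 0
      omega
    rw [h2, hX'] at h1
    rw [hcZ, hcY]
    exact h1
  refine ⟨?_, ?_, ?_⟩
  · rw [hm]
    rcases abs_cases ((cZ : ℤ) - (cY : ℤ)) with ⟨habs, _⟩ | ⟨habs, _⟩ <;> omega
  · rintro ⟨g, hg, hgM⟩
    exact part_i e S hS g hg hgM
  · intro hmax
    obtain ⟨N, E, hE1, hZeq, hYeq, hbound0, hbound1⟩ :=
      part_ii_main e t he (by omega) S hS hX' hmax
    constructor
    · intro hlt
      have hm2 : m - 2 ≤ 2*(N:ℤ) - 2*(E:ℤ) - 1 := by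
        rw [hm]
        rcases abs_cases ((cZ : ℤ) - (cY : ℤ)) with ⟨habs, _⟩ | ⟨habs, _⟩ <;> omega
      linarith [hbound0]
    · intro hlt
      have hm2 : m - 2 ≤ 2*(E:ℤ) - 2*(N:ℤ) - 3 := by
        rw [hm]
        rcases abs_cases ((cZ : ℤ) - (cY : ℤ)) with ⟨habs, _⟩ | ⟨habs, _⟩ <;> omega
      linarith [hbound1]
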